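/- Suppose X has independent increments, i.e. for all 0 < s < t the increment X_t − X_s is independent of 𝔉_{≤s}. Put g_0 ≡ 1 and g_n(t) = E[X_t^n] for n ≥ 1, and define random variables M_n(t) recursively by M_0(t) = 1 and M_n(t) = X_t^n − g_n(t) − Σ_{j=1}^{n−1} C(n,j)·g_j(t)·M_{n−j}(t) for n ≥ 1. Then each process (M_n(t))_{t>0} is a martingale with respect to the filtration (𝔉_{≤t}): for all n ≥ 0 and s < t, E[M_n(t) | 𝔉_{≤s}] = M_n(s) almost surely. -/

import Mathlib

open MeasureTheory ProbabilityTheory Polynomial Filter Finset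

noncomputable section

variable {Ω : Type*}

/-- The σ-algebra of the past: `𝔉_{≤ s} = σ(X_u : 0 < u ≤ s)`. -/
def sigmaLE [MeasurableSpace Ω] (X : ℝ → Ω → ℝ) (s : ℝ) : MeasurableSpace Ω :=
  ⨆ u ∈ Set.Ioc (0 : ℝ) s, MeasurableSpace.comap (X u) inferInstance

/-- The σ-algebra of the future: `𝔉_{≥ s} = σ(X_u : u ≥ s)`. -/
def sigmaGE [MeasurableSpace Ω] (X : ℝ → Ω → ℝ) (s : ℝ) : MeasurableSpace Ω :=
  ⨆ u ∈ Set.Ici s, MeasurableSpace.comap (X u) inferInstance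

/-- The σ-algebra `𝔉_{s,u} = σ(𝔉_{≤ s} ∪ 𝔉_{≥ u})`. -/
def sigmaIntv [MeasurableSpace Ω] (X : ℝ → Ω → ℝ) (s u : ℝ) : MeasurableSpace Ω :=
  sigmaLE X s ⊔ sigmaGE X u

/-- A family of polynomial martingales for the process `X`:
`M n (·,t)` is a polynomial of degree exactly `n` with coefficients continuous in `t`,
`M 0 ≡ 1`, `E[M_n(X_t,t)] = 0` for `n ≥ 1`, and each `M_n(X_t,t)` is a martingale
with respect to the natural filtration of `X`. -/
structure IsPolyMartFamily [MeasurableSpace Ω] (μ : Measure Ω) (X : ℝ → Ω → ℝ)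
    (M : ℕ → ℝ → Polynomial ℝ) : Prop where
  meas : ∀ t : ℝ, 0 < t → Measurable (X t)
  moments : ∀ (n : ℕ) (t : ℝ), 0 < t → Integrable (fun ω => X t ω ^ n) μ
  degree_eq : ∀ (n : ℕ) (t : ℝ), 0 < t → (M n t).degree = n
  coeff_cont : ∀ n k : ℕ, ContinuousOn (fun t => (M n t).coeff k) (Set.Ioi 0)
  zeroth : ∀ t : ℝ, 0 < t → M 0 t = 1
  mean_zero : ∀ n : ℕ, 1 ≤ n → ∀ t : ℝ, 0 < t → ∫ ω, (M n t).eval (X t ω) ∂μ = 0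
  mart : ∀ (n : ℕ) (s t : ℝ), 0 < s → s < t →
    μ[fun ω => (M n t).eval (X t ω) | sigmaLE X s]
      =ᵐ[μ] fun ω => (M n s).eval (X s ω)

/-- `m_n(t) = E[M_n(X_t,t)²]`. -/
def mFun [MeasurableSpace Ω] (μ : Measure Ω) (X : ℝ → Ω → ℝ)
    (M : ℕ → ℝ → Polynomial ℝ) (n : ℕ) (t : ℝ) : ℝ :=
  ∫ ω, ((M n t).eval (X t ω)) ^ 2 ∂μ

/-- Standing regularity assumptions on the functions `m_n`: each `m_n` is continuous,
nondecreasing and strictly positive on `(0,∞)` and `m_n(s) → 0` as `s → 0+`. -/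
structure MRegular [MeasurableSpace Ω] (μ : Measure Ω) (X : ℝ → Ω → ℝ)
    (M : ℕ → ℝ → Polynomial ℝ) : Prop where
  cont : ∀ n : ℕ, ContinuousOn (mFun μ X M n) (Set.Ioi 0)
  mono : ∀ n : ℕ, MonotoneOn (mFun μ X M n) (Set.Ioi 0)
  pos : ∀ (n : ℕ) (t : ℝ), 0 < t → 0 < mFun μ X M n t
  tendsto_zero : ∀ n : ℕ, Tendsto (mFun μ X M n) (nhdsWithin 0 (Set.Ioi 0)) (nhds 0)

/-- A Markov process with polynomial regression (MPR): `X` is Markov, the moment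
generating function of each `X_t` exists in a neighbourhood of `0`, and every
conditional moment `E[X_t^n | 𝔉_{≤ s}]` is a polynomial of degree `n` in `X_s`. -/
structure IsMPR [MeasurableSpace Ω] (μ : Measure Ω) (X : ℝ → Ω → ℝ) : Prop where
  meas : ∀ t : ℝ, 0 < t → Measurable (X t)
  moments : ∀ (n : ℕ) (t : ℝ), 0 < t → Integrable (fun ω => X t ω ^ n) μ
  markov : ∀ (s t : ℝ), 0 < s → s < t → ∀ f : ℝ → ℝ, Measurable f →
    Integrable (fun ω => f (X t ω)) μ →
    μ[fun ω => f (X t ω) | sigmaLE X s]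
      =ᵐ[μ] μ[fun ω => f (X t ω) | MeasurableSpace.comap (X s) inferInstance]
  mgf : ∀ t : ℝ, 0 < t → ∃ α : ℝ, 0 < α ∧
    Integrable (fun ω => Real.exp (α * |X t ω|)) μ
  polyReg : ∀ (n : ℕ) (s t : ℝ), 0 < s → s < t → ∃ p : Polynomial ℝ,
    p.degree = n ∧
      μ[fun ω => X t ω ^ n | sigmaLE X s] =ᵐ[μ] fun ω => p.eval (X s ω)

/-- `X` has independent increments: for all `0 < s < t` the increment `X_t - X_s`
is independent of `𝔉_{≤ s}`. -/
def HasIndepIncrements [MeasurableSpace Ω] (μ : Measure Ω) (X : ℝ → Ω → ℝ) : Prop :=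
  ∀ s t : ℝ, 0 < s → s < t →
    Indep (MeasurableSpace.comap (fun ω => X t ω - X s ω) inferInstance) (sigmaLE X s) μ

/-- If `X` has independent increments then the random variables defined
by the recurrence `M_n(t) = X_t^n - g_n(t) - ∑_{j=1}^{n-1} C(n,j) g_j(t) M_{n-j}(t)`,
with `g_n(t) = E[X_t^n]`, are martingales with respect to the natural filtration. -/

private lemma ae_sum_congr' {Ω : Type*} {mΩ : MeasurableSpace Ω} {μ : Measure Ω} {ι : Type*}
    (u : Finset ι) (f : ι → Ω → ℝ) (g : ι → Ω → ℝ) (h : ∀ i ∈ u, f i =ᵐ[μ] g i) :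
    (∑ i ∈ u, f i) =ᵐ[μ] fun ω => ∑ i ∈ u, g i ω := by
  classical
  induction u using Finset.induction_on with
  | empty => exact Filter.EventuallyEq.of_eq (by funext ω; simp)
  | @insert a u ha ih =>
    rw [Finset.sum_insert ha]
    refine ((h a (Finset.mem_insert_self a u)).add
      (ih fun i hi => h i (Finset.mem_insert_of_mem hi))).trans ?_
    refine Filter.EventuallyEq.of_eq ?_
    funext ω
    simp [Finset.sum_insert ha]

theorem recurrence_gives_martingales
    [MeasurableSpace Ω] (μ : Measure Ω) [IsProbabilityMeasure μ]
    (X : ℝ → Ω → ℝ)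
    (hmeas : ∀ t : ℝ, 0 < t → Measurable (X t))
    (hmom : ∀ (n : ℕ) (t : ℝ), 0 < t → Integrable (fun ω => X t ω ^ n) μ)
    (hind : HasIndepIncrements μ X)
    (M : ℕ → ℝ → Ω → ℝ)
    (hM0 : ∀ t : ℝ, 0 < t → M 0 t = fun _ => (1 : ℝ))
    (hMrec : ∀ n : ℕ, 1 ≤ n → ∀ t : ℝ, 0 < t → M n t = fun ω =>
      X t ω ^ n - (∫ ω', X t ω' ^ n ∂μ)
        - ∑ j ∈ Finset.Icc 1 (n - 1),
            (n.choose j : ℝ) * (∫ ω', X t ω' ^ j ∂μ) * M (n - j) t ω) :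
    ∀ (n : ℕ) (s t : ℝ), 0 < s → s < t →
      μ[M n t | sigmaLE X s] =ᵐ[μ] M n s := by
  classical
  -- σ-algebra facts
  have hle : ∀ r : ℝ, 0 < r → sigmaLE X r ≤ ‹MeasurableSpace Ω› := by
    intro r hr
    exact iSup₂_le fun u hu => (hmeas u hu.1).comap_le
  have hXsigma : ∀ r : ℝ, 0 < r →
      MeasurableSpace.comap (X r) inferInstance ≤ sigmaLE X r := by
    intro r hr
    exact le_iSup₂ (f := fun u (_ : u ∈ Set.Ioc (0:ℝ) r) =>
      MeasurableSpace.comap (X u) inferInstance) r ⟨hr, le_rfl⟩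
  -- mixed moments are integrable
  have hmix : ∀ (a b : ℝ), 0 < a → 0 < b → ∀ i j : ℕ,
      Integrable (fun ω => X a ω ^ i * X b ω ^ j) μ := by
    intro a b ha hb i j
    have h1 := hmom (2*i) a ha
    have h2 := hmom (2*j) b hb
    refine ((h1.add h2).div_const 2).mono'
      ((((hmeas a ha).pow_const i).mul ((hmeas b hb).pow_const j)).aestronglyMeasurable) ?_
    refine Filter.Eventually.of_forall fun ω => ?_
    have key : |X a ω| ^ i * |X b ω| ^ j ≤ (X a ω ^ (2*i) + X b ω ^ (2*j))/2 := by
      have e1 : X a ω ^ (2*i) = (|X a ω| ^ i)^2 := by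
        rw [pow_mul, ← sq_abs, ← pow_mul, mul_comm 2 i, pow_mul]
      have e2 : X b ω ^ (2*j) = (|X b ω| ^ j)^2 := by
        rw [pow_mul, ← sq_abs, ← pow_mul, mul_comm 2 j, pow_mul]
      rw [e1, e2]
      nlinarith [sq_nonneg (|X a ω| ^ i - |X b ω| ^ j)]
    simpa using key
  -- integrability of the M's
  have hMint : ∀ r : ℕ, ∀ a : ℝ, 0 < a → Integrable (M r a) μ := by
    intro r
    induction r using Nat.strong_induction_on with
    | _ r IHr =>
      intro a ha
      rcases Nat.eq_zero_or_pos r with h0 | h1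
      · rw [h0, hM0 a ha]; exact integrable_const 1
      · rw [hMrec r h1 a ha]
        have : Integrable ((fun ω => X a ω ^ r) - (fun _ => (∫ ω', X a ω' ^ r ∂μ))
            - (∑ j ∈ Finset.Icc 1 (r - 1),
              fun ω => (r.choose j : ℝ) * (∫ ω', X a ω' ^ j ∂μ) * M (r - j) a ω)) μ := by
          refine Integrable.sub (Integrable.sub (hmom r a ha) (integrable_const _)) ?_
          refine integrable_finset_sum' _ fun j hj => ?_
          have hj1 : 1 ≤ j := (Finset.mem_Icc.mp hj).1
          exact (IHr (r - j) (by omega) a ha).const_mul _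
        have e : ((fun ω => X a ω ^ r) - (fun _ => (∫ ω', X a ω' ^ r ∂μ))
            - (∑ j ∈ Finset.Icc 1 (r - 1),
              fun ω => (r.choose j : ℝ) * (∫ ω', X a ω' ^ j ∂μ) * M (r - j) a ω))
            = fun ω => X a ω ^ r - (∫ ω', X a ω' ^ r ∂μ)
              - ∑ j ∈ Finset.Icc 1 (r - 1),
                (r.choose j : ℝ) * (∫ ω', X a ω' ^ j ∂μ) * M (r - j) a ω := by
          funext ω
          simp [Finset.sum_apply]
        rwa [e] at this
  -- expansion of powers of X in terms of the M's
  have hXpow : ∀ (a : ℝ), 0 < a → ∀ (r : ℕ) (ω : Ω),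
      X a ω ^ r = ∑ j ∈ Finset.range (r+1),
        (r.choose j : ℝ) * (∫ ω', X a ω' ^ j ∂μ) * M (r - j) a ω := by
    intro a ha r ω
    have hint0 : (∫ ω', X a ω' ^ 0 ∂μ) = 1 := by simp
    rcases Nat.eq_zero_or_pos r with h0 | h1
    · subst h0
      simp [hM0 a ha, hint0]
    · have hsplit : Finset.range (r+1) = insert 0 (insert r (Finset.Icc 1 (r-1))) := by
        ext x
        simp only [Finset.mem_range, Finset.mem_insert, Finset.mem_Icc]
        omega
      have h02 : r ∉ Finset.Icc 1 (r-1) := by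
        simp only [Finset.mem_Icc]; omega
      have h01 : (0:ℕ) ∉ insert r (Finset.Icc 1 (r-1)) := by
        simp only [Finset.mem_insert, Finset.mem_Icc]; omega
      rw [hsplit, Finset.sum_insert h01, Finset.sum_insert h02]
      simp only [Nat.sub_zero, Nat.sub_self, Nat.choose_self, Nat.choose_zero_right,
        Nat.cast_one, hint0, hM0 a ha]
      rw [hMrec r h1 a ha]
      simp only []
      ring
  -- main induction
  intro n
  induction n using Nat.strong_induction_on with
  | _ n IH =>
  intro s t hs hst
  have ht : 0 < t := hs.trans hst
  haveI : SigmaFinite (μ.trim (hle s hs)) := by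
    have := isFiniteMeasure_trim (μ := μ) (hle s hs)
    infer_instance
  rcases Nat.eq_zero_or_pos n with h0 | hn
  · subst h0
    rw [hM0 t ht, hM0 s hs, condExp_const (hle s hs)]
  -- now 1 ≤ n
  -- the increment
  set D : Ω → ℝ := fun ω => X t ω - X s ω with hDdef
  have hDmeas : Measurable D := (hmeas t ht).sub (hmeas s hs)
  have hIndep : Indep (MeasurableSpace.comap D inferInstance) (sigmaLE X s) μ :=
    hind s t hs hst
  have hDint : ∀ q : ℕ, Integrable (fun ω => D ω ^ q) μ := by
    intro q
    have e : (fun ω => D ω ^ q)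
        = fun ω => ∑ i ∈ Finset.range (q+1),
            ((-1:ℝ)^(q-i) * (q.choose i)) * (X t ω ^ i * X s ω ^ (q-i)) := by
      funext ω
      show (X t ω - X s ω) ^ q = _
      rw [sub_eq_add_neg, add_pow]
      refine Finset.sum_congr rfl fun i _ => ?_
      rw [neg_pow]; ring
    rw [e]
    exact integrable_finset_sum _ fun i _ => ((hmix t s ht hs i (q-i)).const_mul _)
  have hmixD : ∀ k q : ℕ, Integrable (fun ω => X s ω ^ k * D ω ^ q) μ := by
    intro k q
    have e : (fun ω => X s ω ^ k * D ω ^ q)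
        = fun ω => ∑ i ∈ Finset.range (q+1),
            ((-1:ℝ)^(q-i) * (q.choose i)) * (X t ω ^ i * X s ω ^ (k + (q-i))) := by
      funext ω
      show X s ω ^ k * (X t ω - X s ω) ^ q = _
      rw [sub_eq_add_neg, add_pow, Finset.mul_sum]
      refine Finset.sum_congr rfl fun i _ => ?_
      rw [neg_pow, pow_add]; ring
    rw [e]
    exact integrable_finset_sum _ fun i _ => ((hmix t s ht hs i (k + (q-i))).const_mul _)
  -- conditional expectation of powers of the increment
  have hCD : ∀ q : ℕ, μ[(fun ω => D ω ^ q)|sigmaLE X s]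
      =ᵐ[μ] fun _ => ∫ ω', D ω' ^ q ∂μ := by
    intro q
    have hsm : StronglyMeasurable[MeasurableSpace.comap D inferInstance]
        (fun ω => D ω ^ q) := by
      have hm0 : Measurable[MeasurableSpace.comap D inferInstance] D :=
        Measurable.of_comap_le le_rfl
      exact (hm0.pow_const q).stronglyMeasurable
    exact condExp_indep_eq hDmeas.comap_le (hle s hs) hsm hIndep
  have hCmulD : ∀ k q : ℕ, μ[(fun ω => X s ω ^ k * D ω ^ q)|sigmaLE X s]
      =ᵐ[μ] fun ω => X s ω ^ k * ∫ ω', D ω' ^ q ∂μ := by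
    intro k q
    have hXs : Measurable[sigmaLE X s] (X s) :=
      Measurable.of_comap_le (hXsigma s hs)
    have h1 : StronglyMeasurable[sigmaLE X s] (fun ω => X s ω ^ k) :=
      (hXs.pow_const k).stronglyMeasurable
    have h2 := condExp_mul_of_stronglyMeasurable_left (μ := μ) h1 (hmixD k q) (hDint q)
    refine h2.trans ?_
    filter_upwards [hCD q] with ω hω
    simp only [Pi.mul_apply]
    rw [hω]
  -- independence of functions and factorization of integrals
  have hIndepFun : ∀ i q : ℕ,
      IndepFun (fun ω => X s ω ^ i) (fun ω => D ω ^ q) μ := by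
    intro i q
    have h1 : Indep (MeasurableSpace.comap (X s) inferInstance)
        (MeasurableSpace.comap D inferInstance) μ := by
      refine Indep.symm ?_
      rw [Indep_iff] at hIndep ⊢
      exact fun t1 t2 ht1 ht2 => hIndep t1 t2 ht1 (hXsigma s hs t2 ht2)
    exact IndepFun.comp h1 (measurable_id.pow_const i) (measurable_id.pow_const q)
  have hfac : ∀ i q : ℕ, (∫ ω, X s ω ^ i * D ω ^ q ∂μ)
      = (∫ ω', X s ω' ^ i ∂μ) * (∫ ω', D ω' ^ q ∂μ) :=
    fun i q => (hIndepFun i q).integral_mul_eq_mul_integral (hmom i s hs).aestronglyMeasurable (hDint q).aestronglyMeasurable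
  -- expansion of the moments of X t
  have hg : ∀ j : ℕ, (∫ ω', X t ω' ^ j ∂μ)
      = ∑ i ∈ Finset.range (j+1),
        (j.choose i : ℝ) * ((∫ ω', X s ω' ^ i ∂μ) * (∫ ω', D ω' ^ (j-i) ∂μ)) := by
    intro j
    have e : (fun ω : Ω => X t ω ^ j)
        = fun ω => ∑ i ∈ Finset.range (j+1),
            (j.choose i : ℝ) * (X s ω ^ i * D ω ^ (j-i)) := by
      funext ω
      have hts : X t ω = X s ω + D ω := by
        show X t ω = X s ω + (X t ω - X s ω); ring
      rw [hts, add_pow]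
      exact Finset.sum_congr rfl fun i _ => by ring
    calc (∫ ω', X t ω' ^ j ∂μ)
        = ∫ ω', ∑ i ∈ Finset.range (j+1),
            (j.choose i : ℝ) * (X s ω' ^ i * D ω' ^ (j-i)) ∂μ := by rw [e]
      _ = ∑ i ∈ Finset.range (j+1),
            ∫ ω', (j.choose i : ℝ) * (X s ω' ^ i * D ω' ^ (j-i)) ∂μ :=
          integral_finset_sum _ fun i _ => ((hmixD i (j-i)).const_mul _)
      _ = _ := by
          refine Finset.sum_congr rfl fun i _ => ?_
          rw [integral_const_mul, hfac i (j-i)]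
  -- the combinatorial identity
  have hcc : ∀ k i : ℕ, i ≤ k → k ≤ n →
      (n.choose k) * (k.choose i) = (n.choose (n - k + i)) * ((n - k + i).choose i) := by
    intro k i hik hkn
    rw [Nat.choose_mul (n := n) hik,
      Nat.choose_mul (n := n) (show i ≤ n - k + i by omega)]
    congr 1
    have h1 : n - k + i - i = n - k := by omega
    rw [h1, ← Nat.choose_symm (show k - i ≤ n - i by omega)]
    congr 1
    omega
  -- the key identity (star)
  have hstar : ∀ ω : Ω,
      (∑ k ∈ Finset.range (n+1),
        (n.choose k : ℝ) * (X s ω ^ k * (∫ ω', D ω' ^ (n-k) ∂μ)))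
      = ∑ j ∈ Finset.range (n+1),
        (n.choose j : ℝ) * (∫ ω', X t ω' ^ j ∂μ) * M (n - j) s ω := by
    intro ω
    calc (∑ k ∈ Finset.range (n+1),
          (n.choose k : ℝ) * (X s ω ^ k * (∫ ω', D ω' ^ (n-k) ∂μ)))
        = ∑ k ∈ Finset.range (n+1), ∑ i ∈ Finset.range (k+1),
            (n.choose k : ℝ) * ((k.choose i : ℝ) * (∫ ω', X s ω' ^ i ∂μ)
              * M (k - i) s ω * (∫ ω', D ω' ^ (n-k) ∂μ)) := by
          refine Finset.sum_congr rfl fun k _ => ?_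
          rw [hXpow s hs k ω, Finset.sum_mul, Finset.mul_sum]
      _ = ∑ j ∈ Finset.range (n+1), ∑ i ∈ Finset.range (j+1),
            (n.choose j : ℝ) * ((j.choose i : ℝ) * ((∫ ω', X s ω' ^ i ∂μ)
              * (∫ ω', D ω' ^ (j-i) ∂μ))) * M (n - j) s ω := by
          rw [Finset.sum_sigma', Finset.sum_sigma']
          refine Finset.sum_nbij' (fun p => ⟨n - p.1 + p.2, p.2⟩)
            (fun p => ⟨n - p.1 + p.2, p.2⟩) ?_ ?_ ?_ ?_ ?_
          · intro p hp
            simp only [Finset.mem_sigma, Finset.mem_range] at hp ⊢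
            omega
          · intro p hp
            simp only [Finset.mem_sigma, Finset.mem_range] at hp ⊢
            omega
          · intro p hp
            obtain ⟨k, i⟩ := p
            simp only [Finset.mem_sigma, Finset.mem_range] at hp
            have e : n - (n - k + i) + i = k := by omega
            simp only [e]
          · intro p hp
            obtain ⟨k, i⟩ := p
            simp only [Finset.mem_sigma, Finset.mem_range] at hp
            have e : n - (n - k + i) + i = k := by omega
            simp only [e]
          · intro p hp
            obtain ⟨k, i⟩ := p
            simp only [Finset.mem_sigma, Finset.mem_range] at hp
            have hik : i ≤ k := by omega
            have hkn : k ≤ n := by omega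
            have e1 : n - k + i - i = n - k := by omega
            have e2 : n - (n - k + i) = k - i := by omega
            simp only [e1, e2]
            have hR : ((n.choose k : ℕ) : ℝ) * ((k.choose i : ℕ) : ℝ)
                = ((n.choose (n - k + i) : ℕ) : ℝ) * (((n - k + i).choose i : ℕ) : ℝ) := by
              exact_mod_cast congrArg (Nat.cast (R := ℝ)) (hcc k i hik hkn)
            linear_combination ((∫ ω', X s ω' ^ i ∂μ) * M (k - i) s ω
              * (∫ ω', D ω' ^ (n-k) ∂μ)) * hR
      _ = _ := by
          refine Finset.sum_congr rfl fun j _ => ?_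
          rw [hg j, Finset.mul_sum, Finset.sum_mul]
  -- splitting of the index range
  have hsplit : Finset.range (n+1) = insert 0 (insert n (Finset.Icc 1 (n-1))) := by
    ext x
    simp only [Finset.mem_range, Finset.mem_insert, Finset.mem_Icc]
    omega
  have h02 : n ∉ Finset.Icc 1 (n-1) := by simp only [Finset.mem_Icc]; omega
  have h01 : (0:ℕ) ∉ insert n (Finset.Icc 1 (n-1)) := by
    simp only [Finset.mem_insert, Finset.mem_Icc]; omega
  -- final pointwise identity
  have hfinal : ∀ ω : Ω,
      (∑ k ∈ Finset.range (n+1),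
        (n.choose k : ℝ) * (X s ω ^ k * (∫ ω', D ω' ^ (n-k) ∂μ)))
        - (∫ ω', X t ω' ^ n ∂μ)
        - (∑ j ∈ Finset.Icc 1 (n-1),
            (n.choose j : ℝ) * (∫ ω', X t ω' ^ j ∂μ) * M (n - j) s ω)
      = M n s ω := by
    intro ω
    have hgt0 : (∫ ω', X t ω' ^ 0 ∂μ) = 1 := by simp
    rw [hstar ω, hsplit, Finset.sum_insert h01, Finset.sum_insert h02]
    simp only [Nat.sub_zero, Nat.sub_self, Nat.choose_self, Nat.choose_zero_right,
      Nat.cast_one, hgt0, hM0 s hs]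
    ring
  -- decomposition of M n t
  have hdecomp : M n t
      = (∑ k ∈ Finset.range (n+1),
          fun ω => (n.choose k : ℝ) * (X s ω ^ k * D ω ^ (n-k)))
        - (fun _ => (∫ ω', X t ω' ^ n ∂μ))
        - (∑ j ∈ Finset.Icc 1 (n-1),
            fun ω => (n.choose j : ℝ) * (∫ ω', X t ω' ^ j ∂μ) * M (n - j) t ω) := by
    rw [hMrec n hn t ht]
    funext ω
    simp only [Pi.sub_apply, Finset.sum_apply]
    congr 2
    have hts : X t ω = X s ω + D ω := by
      show X t ω = X s ω + (X t ω - X s ω); ring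
    rw [hts, add_pow]
    exact Finset.sum_congr rfl fun k _ => by ring
  -- integrability of the pieces
  have hintA : ∀ k ∈ Finset.range (n+1),
      Integrable (fun ω => (n.choose k : ℝ) * (X s ω ^ k * D ω ^ (n-k))) μ :=
    fun k _ => ((hmixD k (n-k)).const_mul _)
  have hintC : ∀ j ∈ Finset.Icc 1 (n-1),
      Integrable (fun ω => (n.choose j : ℝ) * (∫ ω', X t ω' ^ j ∂μ) * M (n - j) t ω) μ :=
    fun j _ => ((hMint (n-j) t ht).const_mul _)
  -- conditional expectations of the pieces
  have eA : μ[(∑ k ∈ Finset.range (n+1),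
        fun ω => (n.choose k : ℝ) * (X s ω ^ k * D ω ^ (n-k)))|sigmaLE X s]
      =ᵐ[μ] fun ω => ∑ k ∈ Finset.range (n+1),
        (n.choose k : ℝ) * (X s ω ^ k * (∫ ω', D ω' ^ (n-k) ∂μ)) := by
    refine (condExp_finsetSum hintA _).trans ?_
    refine ae_sum_congr' _ _ _ fun k _ => ?_
    have h1 : μ[fun ω => (n.choose k : ℝ) * (X s ω ^ k * D ω ^ (n-k))|sigmaLE X s]
        =ᵐ[μ] (n.choose k : ℝ) • μ[fun ω => X s ω ^ k * D ω ^ (n-k)|sigmaLE X s] :=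
      condExp_smul (𝕜 := ℝ) ((n.choose k : ℝ)) (fun ω => X s ω ^ k * D ω ^ (n-k)) _
    refine h1.trans ?_
    filter_upwards [hCmulD k (n-k)] with ω hω
    simp only [Pi.smul_apply, smul_eq_mul]
    rw [hω]
  have eC : μ[(∑ j ∈ Finset.Icc 1 (n-1),
        fun ω => (n.choose j : ℝ) * (∫ ω', X t ω' ^ j ∂μ) * M (n - j) t ω)|sigmaLE X s]
      =ᵐ[μ] fun ω => ∑ j ∈ Finset.Icc 1 (n-1),
        (n.choose j : ℝ) * (∫ ω', X t ω' ^ j ∂μ) * M (n - j) s ω := by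
    refine (condExp_finsetSum hintC _).trans ?_
    refine ae_sum_congr' _ _ _ fun j hj => ?_
    have hj1 : 1 ≤ j := (Finset.mem_Icc.mp hj).1
    have h1 : μ[fun ω => (n.choose j : ℝ) * (∫ ω', X t ω' ^ j ∂μ) * M (n - j) t ω|sigmaLE X s]
        =ᵐ[μ] ((n.choose j : ℝ) * (∫ ω', X t ω' ^ j ∂μ)) • μ[M (n - j) t|sigmaLE X s] :=
      condExp_smul (𝕜 := ℝ) ((n.choose j : ℝ) * (∫ ω', X t ω' ^ j ∂μ)) (M (n - j) t) _
    refine h1.trans ?_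
    have hIH := IH (n - j) (by omega) s t hs hst
    filter_upwards [hIH] with ω hω
    simp only [Pi.smul_apply, smul_eq_mul]
    rw [hω, mul_assoc]
  -- assembling everything
  have intA : Integrable (∑ k ∈ Finset.range (n+1),
      fun ω => (n.choose k : ℝ) * (X s ω ^ k * D ω ^ (n-k))) μ :=
    integrable_finset_sum' _ hintA
  have intB : Integrable (fun _ : Ω => (∫ ω', X t ω' ^ n ∂μ)) μ := integrable_const _
  have intC : Integrable (∑ j ∈ Finset.Icc 1 (n-1),
      fun ω => (n.choose j : ℝ) * (∫ ω', X t ω' ^ j ∂μ) * M (n - j) t ω) μ :=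
    integrable_finset_sum' _ hintC
  calc μ[M n t|sigmaLE X s]
      = μ[((∑ k ∈ Finset.range (n+1),
            fun ω => (n.choose k : ℝ) * (X s ω ^ k * D ω ^ (n-k)))
          - (fun _ => (∫ ω', X t ω' ^ n ∂μ)))
          - (∑ j ∈ Finset.Icc 1 (n-1),
            fun ω => (n.choose j : ℝ) * (∫ ω', X t ω' ^ j ∂μ) * M (n - j) t ω)|sigmaLE X s] := by
        rw [hdecomp]
    _ =ᵐ[μ] μ[(∑ k ∈ Finset.range (n+1),
            fun ω => (n.choose k : ℝ) * (X s ω ^ k * D ω ^ (n-k)))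
          - (fun _ => (∫ ω', X t ω' ^ n ∂μ))|sigmaLE X s]
        - μ[(∑ j ∈ Finset.Icc 1 (n-1),
            fun ω => (n.choose j : ℝ) * (∫ ω', X t ω' ^ j ∂μ) * M (n - j) t ω)|sigmaLE X s] :=
        condExp_sub (intA.sub intB) intC _
    _ =ᵐ[μ] (μ[(∑ k ∈ Finset.range (n+1),
            fun ω => (n.choose k : ℝ) * (X s ω ^ k * D ω ^ (n-k)))|sigmaLE X s]
          - μ[(fun _ : Ω => (∫ ω', X t ω' ^ n ∂μ))|sigmaLE X s])
        - μ[(∑ j ∈ Finset.Icc 1 (n-1),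
            fun ω => (n.choose j : ℝ) * (∫ ω', X t ω' ^ j ∂μ) * M (n - j) t ω)|sigmaLE X s] :=
        (condExp_sub intA intB _).sub (Filter.EventuallyEq.rfl)
    _ =ᵐ[μ] M n s := by
        rw [condExp_const (hle s hs)]
        filter_upwards [eA, eC] with ω hA hC
        simp only [Pi.sub_apply, hA, hC]
        exact hfinal ω
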